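/- Let S and A be measurable spaces, p : S → A → ProbabilityMeasure S a measurable Markov kernel, and d ≥ 1. For an augmented state x = (s₁, a₁, …, a_d) ∈ S × A^d, let b(x) denote the belief: the iterated bind b₀ = δ_{s₁}, b_k = b_{k−1}.bind (s ↦ p(s, a_k)), b(x) = b_d; and for an action a ∈ A let p̃(x, a) denote the augmented transition: the pushforward of p(s₁, a₁) under the map s₂ ↦ (s₂, a₂, …, a_d, a). Then for every x ∈ S × A^d and a ∈ A, the following two probability measures on S coincide: (b(x)).bind (s ↦ p(s, a)) = (p̃(x, a)).bind (x' ↦ b(x')). -/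

import Mathlib

set_option maxHeartbeats 400000


open MeasureTheory

/-- The belief over the current state given a last observed state `s₁` and a queue of actions
`as = [a₁, …, a_d]`: the iterated bind of `δ_{s₁}` through the kernel `p` with the actions of
the queue, applied in order. -/
noncomputable def belief {S A : Type*} [MeasurableSpace S]
    (p : S → A → Measure S) (s₁ : S) (as : List A) : Measure S :=
  as.foldl (fun b a => b.bind fun s => p s a) (Measure.dirac s₁)

/-- Shift an action queue `(a₁, …, a_d)`, dropping the oldest action and appending the new
action `a`, producing `(a₂, …, a_d, a)`. -/
def shiftQueue {A : Type*} {d : ℕ} (q : Fin d → A) (a : A) : Fin d → A :=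
  fun i => if h : (i : ℕ) + 1 < d then q ⟨(i : ℕ) + 1, h⟩ else a

section Aux

variable {S A : Type*} [MeasurableSpace S] [MeasurableSpace A]

/-- Parametric measurability of `bind`. -/
lemma measurable_bind_param {X Y Z : Type*} [MeasurableSpace X] [MeasurableSpace Y]
    [MeasurableSpace Z] (κ : X → Measure Y) (hκ : Measurable κ)
    (hκp : ∀ x, IsProbabilityMeasure (κ x))
    (η : X → Y → Measure Z) (hη : Measurable fun p : X × Y => η p.1 p.2) :
    Measurable fun x => (κ x).bind (η x) := by
  apply Measure.measurable_of_measurable_coe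
  intro B hB
  have hηx : ∀ x, Measurable (η x) := fun x =>
    hη.comp (measurable_const.prodMk measurable_id)
  have : (fun x => (κ x).bind (η x) B) = fun x => ∫⁻ y, η x y B ∂(κ x) := by
    funext x
    exact Measure.bind_apply hB (hηx x).aemeasurable
  rw [this]
  let K : ProbabilityTheory.Kernel X Y := ⟨κ, hκ⟩
  haveI : ProbabilityTheory.IsMarkovKernel K := ⟨fun x => hκp x⟩
  exact Measurable.lintegral_kernel_prod_right (κ := K)
    ((Measure.measurable_coe hB).comp hη)

lemma belief_meas_and_bind (p : S → A → Measure S)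
    (hp_prob : ∀ s a, IsProbabilityMeasure (p s a))
    (hp_meas : Measurable fun q : S × A => p q.1 q.2) (as : List A) :
    Measurable (fun s => belief p s as) ∧
      ∀ μ : Measure S,
        as.foldl (fun b a => b.bind fun s => p s a) μ = μ.bind (fun s => belief p s as) := by
  induction as with
  | nil =>
    refine ⟨Measure.measurable_dirac, fun μ => (Measure.bind_dirac).symm⟩
  | cons a as ih =>
    obtain ⟨h1, h2⟩ := ih
    have hpa : Measurable (fun s => p s a) :=
      hp_meas.comp (measurable_id.prodMk measurable_const)
    have hcons : ∀ s, belief p s (a :: as) = (p s a).bind (fun s' => belief p s' as) := by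
      intro s
      show (a :: as).foldl (fun b a => b.bind fun s => p s a) (Measure.dirac s)
          = (p s a).bind (fun s' => belief p s' as)
      rw [List.foldl_cons, Measure.dirac_bind hpa, h2]
    constructor
    · have := measurable_bind_param (fun s => p s a) hpa (fun s => hp_prob s a)
        (fun _ s' => belief p s' as) (h1.comp measurable_snd)
      simpa [hcons] using this
    · intro μ
      show ((a :: as).foldl (fun b a => b.bind fun s => p s a) μ) = _
      rw [List.foldl_cons, h2, Measure.bind_bind hpa.aemeasurable h1.aemeasurable]
      simp only [hcons]

/-- Joint measurability of the belief as a function of the augmented state. -/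
lemma belief_vec_measurable (p : S → A → Measure S)
    (hp_prob : ∀ s a, IsProbabilityMeasure (p s a))
    (hp_meas : Measurable fun q : S × A => p q.1 q.2) :
    ∀ d : ℕ, Measurable fun x : S × (Fin d → A) => belief p x.1 (List.ofFn x.2) := by
  intro d
  induction d with
  | zero =>
    simpa [belief, Function.comp_def] using Measure.measurable_dirac.comp (measurable_fst)
  | succ n ih =>
    have key : ∀ x : S × (Fin (n + 1) → A),
        belief p x.1 (List.ofFn x.2)
          = (p x.1 (x.2 0)).bind (fun s' => belief p s' (List.ofFn (Fin.tail x.2))) := by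
      rintro ⟨s, v⟩
      have : List.ofFn v = v 0 :: List.ofFn (Fin.tail v) := by
        rw [List.ofFn_succ]; rfl
      rw [this]
      show ((v 0 :: List.ofFn (Fin.tail v)).foldl
          (fun b a => b.bind fun s => p s a) (Measure.dirac s)) = _
      have hpa : Measurable (fun s => p s (v 0)) :=
        hp_meas.comp (measurable_id.prodMk measurable_const)
      rw [List.foldl_cons, Measure.dirac_bind hpa,
        (belief_meas_and_bind p hp_prob hp_meas (List.ofFn (Fin.tail v))).2]
    have hκ : Measurable fun x : S × (Fin (n + 1) → A) => p x.1 (x.2 0) :=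
      hp_meas.comp (measurable_fst.prodMk ((measurable_pi_apply 0).comp measurable_snd))
    have htail : Measurable fun v : Fin (n + 1) → A => Fin.tail v :=
      measurable_pi_lambda _ (fun i => measurable_pi_apply i.succ)
    have hg : Measurable fun pr : (S × (Fin (n + 1) → A)) × S =>
        ((pr.2, Fin.tail pr.1.2) : S × (Fin n → A)) :=
      measurable_snd.prodMk (htail.comp (measurable_snd.comp measurable_fst))
    have hη : Measurable fun pr : (S × (Fin (n + 1) → A)) × S =>
        belief p pr.2 (List.ofFn (Fin.tail pr.1.2)) := by
      have heq : (fun pr : (S × (Fin (n + 1) → A)) × S =>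
          belief p pr.2 (List.ofFn (Fin.tail pr.1.2)))
          = (fun x : S × (Fin n → A) => belief p x.1 (List.ofFn x.2)) ∘
            (fun pr => (pr.2, Fin.tail pr.1.2)) := by
        funext pr; rfl
      rw [heq]
      exact ih.comp hg
    have h5 : Measurable fun x : S × (Fin (n + 1) → A) =>
        (p x.1 (x.2 0)).bind (fun s' => belief p s' (List.ofFn (Fin.tail x.2))) :=
      measurable_bind_param (fun x : S × (Fin (n + 1) → A) => p x.1 (x.2 0)) hκ
        (fun x => hp_prob _ _)
        (fun x s' => belief p s' (List.ofFn (Fin.tail x.2))) hη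
    have heq : (fun x : S × (Fin (n + 1) → A) => belief p x.1 (List.ofFn x.2))
        = fun x => (p x.1 (x.2 0)).bind (fun s' => belief p s' (List.ofFn (Fin.tail x.2))) :=
      funext key
    rw [heq]
    exact h5

end Aux

/-- **Commutation identity (key step of Lemma 1).** Taking the belief of an augmented state and
then one transition step equals taking one augmented transition and then the belief:
`b(x).bind (p(·,a)) = p̃(x,a).bind b`. -/
theorem belief_augmented_comm {S A : Type*} [MeasurableSpace S] [MeasurableSpace A]
    (p : S → A → Measure S) (hp_prob : ∀ s a, IsProbabilityMeasure (p s a))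
    (hp_meas : Measurable fun q : S × A => p q.1 q.2)
    (d : ℕ) (hd : 0 < d) (s₁ : S) (q : Fin d → A) (a : A) :
    (belief p s₁ (List.ofFn q)).bind (fun s => p s a) =
      ((p s₁ (q ⟨0, hd⟩)).map (fun s₂ => (s₂, shiftQueue q a))).bind
        (fun x' : S × (Fin d → A) => belief p x'.1 (List.ofFn x'.2)) := by
  obtain ⟨n, rfl⟩ : ∃ n, d = n + 1 := ⟨d - 1, (Nat.succ_pred_eq_of_pos hd).symm⟩
  -- the shifted queue as a list
  have hshift : List.ofFn (shiftQueue q a) = List.ofFn (Fin.tail q) ++ [a] := by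
    rw [List.ofFn_succ' (shiftQueue q a)]
    have h1 : shiftQueue q a (Fin.last n) = a := by
      simp [shiftQueue, Fin.last]
    have h2 : (fun i : Fin n => shiftQueue q a i.castSucc) = fun i : Fin n => Fin.tail q i := by
      funext i
      simp only [shiftQueue, Fin.coe_castSucc, Fin.tail]
      rw [dif_pos (Nat.succ_lt_succ i.isLt)]
      rfl
    rw [h1, h2, List.concat_eq_append]
  -- LHS as belief over the extended list
  have hLHS : (belief p s₁ (List.ofFn q)).bind (fun s => p s a)
      = belief p s₁ (List.ofFn q ++ [a]) := by
    simp [belief, List.foldl_append]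
  have hofq : List.ofFn q ++ [a] = q 0 :: (List.ofFn (Fin.tail q) ++ [a]) := by
    rw [List.ofFn_succ]; rfl
  have hpa0 : Measurable (fun s => p s (q 0)) :=
    hp_meas.comp (measurable_id.prodMk measurable_const)
  have hLHS2 : belief p s₁ (List.ofFn q ++ [a])
      = (p s₁ (q 0)).bind (fun s => belief p s (List.ofFn (Fin.tail q) ++ [a])) := by
    rw [hofq]
    show ((q 0 :: (List.ofFn (Fin.tail q) ++ [a])).foldl
        (fun b a => b.bind fun s => p s a) (Measure.dirac s₁)) = _
    rw [List.foldl_cons, Measure.dirac_bind hpa0,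
      (belief_meas_and_bind p hp_prob hp_meas _).2]
  -- RHS: unfold the pushforward
  have hf : Measurable fun s₂ : S => (s₂, shiftQueue q a) :=
    measurable_id.prodMk measurable_const
  have hg : Measurable fun x' : S × (Fin (n + 1) → A) => belief p x'.1 (List.ofFn x'.2) :=
    belief_vec_measurable p hp_prob hp_meas (n + 1)
  have hRHS : ((p s₁ (q ⟨0, Nat.succ_pos n⟩)).map (fun s₂ => (s₂, shiftQueue q a))).bind
        (fun x' : S × (Fin (n + 1) → A) => belief p x'.1 (List.ofFn x'.2))
      = (p s₁ (q 0)).bind (fun s₂ => belief p s₂ (List.ofFn (shiftQueue q a))) := by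
    show Measure.join _ = Measure.join _
    rw [Measure.map_map hg hf]
    rfl
  rw [hLHS, hLHS2, hRHS, hshift]
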